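/- Linearity of ξ₀ along admissible segments: with q, τ, and admissible B^Q_τ(q) as above, for p ∈ B^Q_τ(q) and s ∈ [0,1] define p(s) := ∑_j ⟦ s·q_{κ_j} + (1−s)·p_j^{κ_j} ⟧ using the unique pairing κ. Then ξ₀(p(s)) = s·ξ₀(q) + (1−s)·ξ₀(p). In particular |ξ₀(q) − ξ₀(p)| = G(p,q) for all p in the admissible ball. -/

import Mathlib

open Finset

set_option maxHeartbeats 1000000

/-- The Almgren metric on unordered `Q`-tuples in `ℝⁿ`. -/
noncomputable def Gdist {n Q : ℕ} (p q : Fin Q → EuclideanSpace ℝ (Fin n)) : ℝ :=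
  Finset.univ.inf' Finset.univ_nonempty
    (fun σ : Equiv.Perm (Fin Q) => Real.sqrt (∑ i, ‖p i - q (σ i)‖ ^ 2))

/-- The sorting map for tuples of reals. -/
noncomputable def ξsort {Q : ℕ} (p : Fin Q → ℝ) : Fin Q → ℝ := p ∘ Tuple.sort p

/-- A coordinate of a Euclidean vector is bounded by the norm. -/
lemma abs_apply_le_norm {n : ℕ} (x : EuclideanSpace ℝ (Fin n)) (α : Fin n) :
    |x α| ≤ ‖x‖ := by
  rw [EuclideanSpace.norm_eq, ← Real.sqrt_sq_eq_abs]
  apply Real.sqrt_le_sqrt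
  calc x α ^ 2 = ‖x α‖ ^ 2 := by rw [Real.norm_eq_abs, sq_abs]
    _ ≤ ∑ i, ‖x i‖ ^ 2 :=
      Finset.single_le_sum (fun i _ => sq_nonneg ‖x i‖) (Finset.mem_univ α)

/-- Linearity of `ξ₀` along admissible segments: if `B^Q_τ(q)` is admissible,
`p ∈ B^Q_τ(q)` with pairing `κ`, and `p(s) := ∑_j ⟦s·q_{κ j} + (1−s)·p_j⟧` for
`s ∈ [0,1]`, then `ξ₀(p(s)) = s·ξ₀(q) + (1−s)·ξ₀(p)` (coordinatewise for each sorted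
coordinate vector); in particular `|ξ₀(q) − ξ₀(p)| = G(p,q)`. -/
theorem stmt_10 (n Q I : ℕ) (qi : Fin I → EuclideanSpace ℝ (Fin n))
    (hinj : Function.Injective qi) (τ : ℝ) (hτ : 0 < τ)
    (hadm : ∀ (α : Fin n) (i j : Fin I), i ≠ j →
      Disjoint (Set.Icc (qi i α - τ) (qi i α + τ)) (Set.Icc (qi j α - τ) (qi j α + τ)))
    (κ : Fin Q → Fin I) (p : Fin Q → EuclideanSpace ℝ (Fin n))
    (hpair : ∀ j, ‖p j - qi (κ j)‖ ≤ τ)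
    (s : ℝ) (hs : s ∈ Set.Icc (0 : ℝ) 1) :
    (∀ (α : Fin n) (i : Fin Q),
      ξsort (fun j => (s • qi (κ j) + (1 - s) • p j : EuclideanSpace ℝ (Fin n)) α) i
        = s * ξsort (fun j => qi (κ j) α) i + (1 - s) * ξsort (fun j => p j α) i) ∧
    Real.sqrt (∑ α : Fin n, ∑ i : Fin Q,
        (ξsort (fun j => qi (κ j) α) i - ξsort (fun j => p j α) i) ^ 2)
      = Gdist p (fun j => qi (κ j)) := by
  obtain ⟨hs0, hs1⟩ := hs
  -- coordinatewise bound
  have hcoord : ∀ (j : Fin Q) (α : Fin n), |p j α - qi (κ j) α| ≤ τ := by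
    intro j α
    calc |p j α - qi (κ j) α| = |(p j - qi (κ j)) α| := by
          simp [PiLp.sub_apply]
      _ ≤ ‖p j - qi (κ j)‖ := abs_apply_le_norm _ _
      _ ≤ τ := hpair j
  -- separation of distinct support points, in every coordinate
  have hsep : ∀ (α : Fin n) (i j : Fin I), i ≠ j → qi i α ≤ qi j α →
      qi i α + τ < qi j α - τ := by
    intro α i j hij hle
    by_contra h
    push_neg at h
    have : qi j α - τ ∈ Set.Icc (qi i α - τ) (qi i α + τ) ∩
        Set.Icc (qi j α - τ) (qi j α + τ) := by
      constructor
      · exact ⟨by linarith, h⟩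
      · exact ⟨le_refl _, by linarith⟩
    exact Set.disjoint_left.mp (hadm α i j hij) this.1 this.2
  -- the order of the p-coordinates is compatible with that of the q-coordinates
  have hmono : ∀ (α : Fin n) (j k : Fin Q), p j α ≤ p k α →
      qi (κ j) α ≤ qi (κ k) α := by
    intro α j k hjk
    by_contra h
    push_neg at h
    have hne : κ k ≠ κ j := fun he => absurd (he ▸ h) (lt_irrefl _)
    have hsep' := hsep α (κ k) (κ j) hne h.le
    have h1 := abs_le.mp (hcoord j α)
    have h2 := abs_le.mp (hcoord k α)
    linarith
  -- the sorting permutation of `p·α` sorts everything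
  have hkey : ∀ α : Fin n,
      (ξsort (fun j => qi (κ j) α)
          = (fun j => qi (κ j) α) ∘ (Tuple.sort (fun j => p j α))) ∧
      (ξsort (fun j => p j α)
          = (fun j => p j α) ∘ (Tuple.sort (fun j => p j α))) ∧
      (ξsort (fun j => (s • qi (κ j) + (1 - s) • p j : EuclideanSpace ℝ (Fin n)) α)
          = (fun j => (s • qi (κ j) + (1 - s) • p j : EuclideanSpace ℝ (Fin n)) α)
            ∘ (Tuple.sort (fun j => p j α))) := by
    intro α
    have hmp : Monotone ((fun j => p j α) ∘ Tuple.sort (fun j => p j α)) :=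
      Tuple.monotone_sort _
    have hmq : Monotone ((fun j => qi (κ j) α) ∘ Tuple.sort (fun j => p j α)) :=
      fun a b hab => hmono α _ _ (hmp hab)
    refine ⟨?_, rfl, ?_⟩
    · unfold ξsort
      exact (Tuple.comp_sort_eq_comp_iff_monotone.mpr hmq).symm
    · have hmc : Monotone ((fun j =>
          (s • qi (κ j) + (1 - s) • p j : EuclideanSpace ℝ (Fin n)) α)
          ∘ Tuple.sort (fun j => p j α)) := by
        intro a b hab
        have h1 := hmq hab
        have h2 := hmp hab
        simp only [Function.comp_apply, PiLp.add_apply, PiLp.smul_apply,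
          smul_eq_mul] at *
        nlinarith
      unfold ξsort
      exact (Tuple.comp_sort_eq_comp_iff_monotone.mpr hmc).symm
  constructor
  · intro α i
    obtain ⟨h1, h2, h3⟩ := hkey α
    rw [h1, h2, h3]
    simp [PiLp.add_apply, PiLp.smul_apply, smul_eq_mul]
  · -- second part
    have hsum : (∑ α : Fin n, ∑ i : Fin Q,
        (ξsort (fun j => qi (κ j) α) i - ξsort (fun j => p j α) i) ^ 2)
        = ∑ j : Fin Q, ‖p j - qi (κ j)‖ ^ 2 := by
      have : ∀ α : Fin n, (∑ i : Fin Q,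
          (ξsort (fun j => qi (κ j) α) i - ξsort (fun j => p j α) i) ^ 2)
          = ∑ j : Fin Q, (p j α - qi (κ j) α) ^ 2 := by
        intro α
        obtain ⟨h1, h2, -⟩ := hkey α
        rw [h1, h2]
        rw [← Equiv.sum_comp (Tuple.sort (fun j => p j α))
          (fun j => (p j α - qi (κ j) α) ^ 2)]
        apply Finset.sum_congr rfl
        intro i _
        simp only [Function.comp_apply]
        ring
      rw [Finset.sum_congr rfl (fun α _ => this α), Finset.sum_comm]
      apply Finset.sum_congr rfl
      intro j _
      rw [EuclideanSpace.norm_eq, Real.sq_sqrt (by positivity)]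
      apply Finset.sum_congr rfl
      intro α _
      rw [Real.norm_eq_abs, sq_abs]
      simp [PiLp.sub_apply]
    rw [hsum]
    -- the identity permutation realizes the infimum
    have hpt : ∀ (σ : Equiv.Perm (Fin Q)) (i : Fin Q),
        ‖p i - qi (κ i)‖ ≤ ‖p i - qi (κ (σ i))‖ := by
      intro σ i
      by_cases hc : κ (σ i) = κ i
      · rw [hc]
      rcases Nat.eq_zero_or_pos n with hn | hn
      · subst hn
        have : Subsingleton (EuclideanSpace ℝ (Fin 0)) :=
          ⟨fun a b => by ext x; exact x.elim0⟩
        rw [Subsingleton.elim (p i - qi (κ i)) (p i - qi (κ (σ i)))]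
      · set α : Fin n := ⟨0, hn⟩
        have h1 := abs_le.mp (hcoord i α)
        have h2 : τ < |p i α - qi (κ (σ i)) α| := by
          rcases le_total (qi (κ i) α) (qi (κ (σ i)) α) with hle | hle
          · have := hsep α (κ i) (κ (σ i)) (Ne.symm hc) hle
            rw [abs_sub_comm, abs_of_pos (by linarith)]
            linarith
          · have := hsep α (κ (σ i)) (κ i) hc hle
            rw [abs_of_pos (by linarith)]
            linarith
        calc ‖p i - qi (κ i)‖ ≤ τ := hpair i
          _ ≤ |p i α - qi (κ (σ i)) α| := h2.le
          _ = |(p i - qi (κ (σ i))) α| := by simp [PiLp.sub_apply]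
          _ ≤ ‖p i - qi (κ (σ i))‖ := abs_apply_le_norm _ _
    apply le_antisymm
    · apply Finset.le_inf'
      intro σ _
      apply Real.sqrt_le_sqrt
      exact Finset.sum_le_sum fun i _ =>
        pow_le_pow_left₀ (norm_nonneg _) (hpt σ i) 2
    · unfold Gdist
      exact Finset.inf'_le _ (Finset.mem_univ (1 : Equiv.Perm (Fin Q)))
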